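/- Let G be a connected graph in which every vertex has a loop, with minimum degree δ (counting loops), and let r ≥ 6 with r ≢ 0 (mod 3) and diam(G) ≥ r. Then the number of edges of G^r satisfies e(G^r) ≥ (1/2)·⌈r/3⌉·δ·|G| + (1/2)·|G|. -/

import Mathlib

open Finset SimpleGraph

namespace EdgeGrowthAux

variable {V : Type*}

lemma dist_le_one {G : SimpleGraph V} {x y : V} (h : G.Adj x y) : G.dist x y ≤ 1 := by
  simpa using SimpleGraph.dist_le h.toWalk

lemma dist_getVert_le {G : SimpleGraph V} (hG : G.Connected) {x y : V}
    (p : G.Walk x y) (i : ℕ) : G.dist x (p.getVert i) ≤ i := by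
  induction p generalizing i with
  | nil => rw [Walk.getVert_of_length_le Walk.nil (by simp)]; simp [SimpleGraph.dist_self]
  | @cons x' y' z' h q ih =>
    cases i with
    | zero => simp [Walk.getVert_zero]
    | succ n =>
      have h1 : G.dist x' y' ≤ 1 := dist_le_one h
      have h2 := ih n
      have h3 := hG.dist_triangle (u := x') (v := y') (w := q.getVert n)
      have h4 : (Walk.cons h q).getVert (n+1) = q.getVert n := rfl
      rw [h4]
      omega

lemma dist_getVert_right_le {G : SimpleGraph V} {x y : V}
    (p : G.Walk x y) (i : ℕ) : G.dist (p.getVert i) y ≤ p.length - i := by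
  induction p generalizing i with
  | nil => rw [Walk.getVert_of_length_le Walk.nil (by simp)]; simp [SimpleGraph.dist_self]
  | @cons x' y' z' h q ih =>
    cases i with
    | zero =>
      simpa using SimpleGraph.dist_le (Walk.cons h q)
    | succ n =>
      have h2 := ih n
      have h4 : (Walk.cons h q).getVert (n+1) = q.getVert n := rfl
      have h5 : (Walk.cons h q).length = q.length + 1 := by simp
      rw [h4, h5]
      have : q.length + 1 - (n + 1) = q.length - n := by omega
      rw [this]
      exact h2

lemma exists_between {G : SimpleGraph V} (hG : G.Connected) (x y : V) {i : ℕ}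
    (hi : i ≤ G.dist x y) : ∃ z, G.dist x z = i ∧ i + G.dist z y = G.dist x y := by
  obtain ⟨p, hp⟩ := hG.exists_walk_length_eq_dist x y
  have h1 := dist_getVert_le hG p i
  have h2 := dist_getVert_right_le p i
  have h3 := hG.dist_triangle (u := x) (v := p.getVert i) (w := y)
  exact ⟨p.getVert i, by omega, by omega⟩

lemma ball_ge_of_centers [Fintype V] {G : SimpleGraph V} [DecidableRel G.Adj]
    (hG : G.Connected) {v : V} {r : ℕ}
    (C : Finset V) (hC1 : ∀ x ∈ C, G.dist v x + 1 ≤ r)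
    (hC2 : ∀ x ∈ C, ∀ y ∈ C, x ≠ y → 3 ≤ G.dist x y) :
    C.card * (G.minDegree + 1) ≤ (univ.filter (fun z => G.dist v z ≤ r)).card := by
  classical
  have hsub : ∀ x ∈ C, insert x (G.neighborFinset x) ⊆
      univ.filter (fun z => G.dist v z ≤ r) := by
    intro x hx z hz
    simp only [mem_insert, mem_neighborFinset] at hz
    have hxz : G.dist x z ≤ 1 := by
      rcases hz with rfl | hz
      · simp [SimpleGraph.dist_self]
      · exact dist_le_one hz
    have htri := hG.dist_triangle (u := v) (v := x) (w := z)
    have := hC1 x hx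
    simp only [mem_filter, mem_univ, true_and]
    omega
  have hdisj : ∀ x ∈ C, ∀ y ∈ C, x ≠ y →
      Disjoint (insert x (G.neighborFinset x)) (insert y (G.neighborFinset y)) := by
    intro x hx y hy hxy
    rw [Finset.disjoint_left]
    intro z hzx hzy
    simp only [mem_insert, mem_neighborFinset] at hzx hzy
    have h1 : G.dist x z ≤ 1 := by
      rcases hzx with rfl | h
      · simp [SimpleGraph.dist_self]
      · exact dist_le_one h
    have h2 : G.dist y z ≤ 1 := by
      rcases hzy with rfl | h
      · simp [SimpleGraph.dist_self]
      · exact dist_le_one h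
    have h3 := hG.dist_triangle (u := x) (v := z) (w := y)
    have h4 : G.dist z y = G.dist y z := SimpleGraph.dist_comm
    have h5 := hC2 x hx y hy hxy
    omega
  calc C.card * (G.minDegree + 1)
      = ∑ _x ∈ C, (G.minDegree + 1) := by rw [Finset.sum_const, smul_eq_mul]
    _ ≤ ∑ x ∈ C, (insert x (G.neighborFinset x)).card := by
        refine Finset.sum_le_sum fun x _ => ?_
        rw [Finset.card_insert_of_notMem (G.notMem_neighborFinset_self x),
          G.card_neighborFinset_eq_degree]
        exact Nat.add_le_add_right (G.minDegree_le_degree x) 1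
    _ = (C.biUnion (fun x => insert x (G.neighborFinset x))).card :=
        (Finset.card_biUnion hdisj).symm
    _ ≤ (univ.filter (fun z => G.dist v z ≤ r)).card := by
        apply Finset.card_le_card
        intro z hz
        obtain ⟨x, hx, hzx⟩ := Finset.mem_biUnion.mp hz
        exact hsub x hx hzx


lemma ball_card_core [Fintype V] {G : SimpleGraph V} [DecidableRel G.Adj]
    (hG : G.Connected) {r : ℕ} (hr : 6 ≤ r) {u w v : V} (huw : r ≤ G.dist u w)
    (hab : G.dist v u ≤ G.dist v w) :
    (r + 2) / 3 * (G.minDegree + 1) ≤ (univ.filter (fun z => G.dist v z ≤ r)).card := by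
  classical
  set a := G.dist v u with ha
  set b := G.dist v w with hb
  set d' := G.dist u w with hd'
  have htri : d' ≤ a + b := by
    have h1 := hG.dist_triangle (u := u) (v := v) (w := w)
    have h2 : G.dist u v = a := SimpleGraph.dist_comm
    omega
  set e := a + b - d' with he
  set s0 := (e + 4) / 2 with hs0
  set b' := min b (r - 1) with hb'
  set a' := min a (r - 1) with ha'
  -- choose points on geodesics
  have Hg : ∀ i : ℕ, ∃ z : V, i ≤ b → (G.dist v z = i ∧ i + G.dist z w = b) := by
    intro i
    by_cases hib : i ≤ b
    · exact (exists_between hG v w hib).imp fun z hz => fun _ => hz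
    · exact ⟨v, fun h' => absurd h' hib⟩
  choose gg hgg using Hg
  have Hh : ∀ i : ℕ, ∃ z : V, i ≤ a → (G.dist v z = i ∧ i + G.dist z u = a) := by
    intro i
    by_cases hib : i ≤ a
    · exact (exists_between hG v u hib).imp fun z hz => fun _ => hz
    · exact ⟨v, fun h' => absurd h' hib⟩
  choose hh hhh using Hh
  set J1 := Finset.range (b' + 1) with hJ1
  set J2 := Finset.Icc s0 a' with hJ2
  have hmin1 : b' = b ∨ b' = r - 1 := min_choice b (r - 1)
  have hmin2 : a' = a ∨ a' = r - 1 := min_choice a (r - 1)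
  have hb'le : b' ≤ b ∧ b' ≤ r - 1 := ⟨min_le_left _ _, min_le_right _ _⟩
  have ha'le : a' ≤ a ∧ a' ≤ r - 1 := ⟨min_le_left _ _, min_le_right _ _⟩
  -- the counting step
  have hcount : r ≤ J1.card + J2.card := by
    rw [hJ1, hJ2, Finset.card_range, Nat.card_Icc]
    -- if b ≤ r - 2 we need s0 ≤ a
    rcases le_or_gt (r - 1) b with hbig | hsmall
    · omega
    · -- b ≤ r - 2
      have hanz : a ≠ 0 := by
        intro h0
        have : v = u := by
          have := SimpleGraph.dist_eq_zero_iff_eq_or_not_reachable (G := G) (u := v) (v := u)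
          rcases (this.mp h0) with h | h
          · exact h
          · exact absurd (hG.preconnected v u) h
        rw [this] at hb
        omega
      omega
  -- pigeonhole over residues mod 3
  set R := (r + 2) / 3 with hR
  have hfib1 : J1.card = ∑ ρ ∈ Finset.range 3, (J1.filter (fun i => i % 3 = ρ)).card :=
    Finset.card_eq_sum_card_fiberwise (fun x _ => Finset.mem_range.mpr (Nat.mod_lt _ (by norm_num)))
  have hfib2 : J2.card = ∑ ρ ∈ Finset.range 3, (J2.filter (fun i => i % 3 = ρ)).card :=
    Finset.card_eq_sum_card_fiberwise (fun x _ => Finset.mem_range.mpr (Nat.mod_lt _ (by norm_num)))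
  have hex : ∃ ρ, R ≤ (J1.filter (fun i => i % 3 = ρ)).card
      + (J2.filter (fun i => i % 3 = ρ)).card := by
    by_contra hc
    push_neg at hc
    have hsum : ∑ ρ ∈ Finset.range 3, ((J1.filter (fun i => i % 3 = ρ)).card
        + (J2.filter (fun i => i % 3 = ρ)).card) ≤ 3 * (R - 1) := by
      have : ∀ ρ ∈ Finset.range 3, (J1.filter (fun i => i % 3 = ρ)).card
          + (J2.filter (fun i => i % 3 = ρ)).card ≤ R - 1 := by
        intro ρ _
        have := hc ρ
        omega
      calc _ ≤ ∑ _ρ ∈ Finset.range 3, (R - 1) := Finset.sum_le_sum this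
        _ = 3 * (R - 1) := by simp [Finset.sum_const, mul_comm]
    rw [Finset.sum_add_distrib, ← hfib1, ← hfib2] at hsum
    omega
  obtain ⟨ρ, hρ⟩ := hex
  set K1 := J1.filter (fun i => i % 3 = ρ) with hK1
  set K2 := J2.filter (fun i => i % 3 = ρ) with hK2
  -- facts about members
  have hK1mem : ∀ i ∈ K1, i ≤ b' ∧ i % 3 = ρ := by
    intro i hi
    rw [hK1, Finset.mem_filter, hJ1, Finset.mem_range] at hi
    omega
  have hK2mem : ∀ i ∈ K2, s0 ≤ i ∧ i ≤ a' ∧ i % 3 = ρ := by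
    intro i hi
    rw [hK2, Finset.mem_filter, hJ2, Finset.mem_Icc] at hi
    omega
  have hgg' : ∀ i ∈ K1, G.dist v (gg i) = i ∧ i + G.dist (gg i) w = b := by
    intro i hi
    exact hgg i ((hK1mem i hi).1.trans hb'le.1)
  have hhh' : ∀ i ∈ K2, G.dist v (hh i) = i ∧ i + G.dist (hh i) u = a := by
    intro i hi
    exact hhh i ((hK2mem i hi).2.1.trans ha'le.1)
  -- cross distance bounds
  have dist_gg_gg : ∀ i ∈ K1, ∀ j ∈ K1, i ≠ j → 3 ≤ G.dist (gg i) (gg j) := by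
    intro i hi j hj hij
    have h1 := (hgg' i hi).1
    have h2 := (hgg' j hj).1
    have t1 := hG.dist_triangle (u := v) (v := gg i) (w := gg j)
    have t2 := hG.dist_triangle (u := v) (v := gg j) (w := gg i)
    have hcomm : G.dist (gg j) (gg i) = G.dist (gg i) (gg j) := SimpleGraph.dist_comm
    have hm1 := (hK1mem i hi).2
    have hm2 := (hK1mem j hj).2
    omega
  have dist_hh_hh : ∀ i ∈ K2, ∀ j ∈ K2, i ≠ j → 3 ≤ G.dist (hh i) (hh j) := by
    intro i hi j hj hij
    have h1 := (hhh' i hi).1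
    have h2 := (hhh' j hj).1
    have t1 := hG.dist_triangle (u := v) (v := hh i) (w := hh j)
    have t2 := hG.dist_triangle (u := v) (v := hh j) (w := hh i)
    have hcomm : G.dist (hh j) (hh i) = G.dist (hh i) (hh j) := SimpleGraph.dist_comm
    have hm1 := (hK2mem i hi).2.2
    have hm2 := (hK2mem j hj).2.2
    omega
  have dist_gg_hh : ∀ i ∈ K1, ∀ j ∈ K2, 3 ≤ G.dist (gg i) (hh j) := by
    intro i hi j hj
    rcases eq_or_ne i j with rfl | hij
    · -- same index : use the u -- w distance
      have h1 := (hgg' i hi).2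
      have h2 := (hhh' i hj).2
      have t1 := hG.dist_triangle (u := u) (v := hh i) (w := w)
      have t2 := hG.dist_triangle (u := hh i) (v := gg i) (w := w)
      have c1 : G.dist u (hh i) = G.dist (hh i) u := SimpleGraph.dist_comm
      have c2 : G.dist (hh i) (gg i) = G.dist (gg i) (hh i) := SimpleGraph.dist_comm
      have hs : s0 ≤ i := (hK2mem i hj).1
      omega
    · have h1 := (hgg' i hi).1
      have h2 := (hhh' j hj).1
      have t1 := hG.dist_triangle (u := v) (v := gg i) (w := hh j)
      have t2 := hG.dist_triangle (u := v) (v := hh j) (w := gg i)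
      have hcomm : G.dist (hh j) (gg i) = G.dist (gg i) (hh j) := SimpleGraph.dist_comm
      have hm1 := (hK1mem i hi).2
      have hm2 := (hK2mem j hj).2.2
      omega
  -- the set of centers
  set C := K1.image gg ∪ K2.image hh with hC
  have hCcard : R ≤ C.card := by
    have hinj1 : Set.InjOn gg K1 := by
      intro i hi j hj hij
      have h1 := (hgg' i hi).1
      have h2 := (hgg' j hj).1
      rw [← h1, ← h2, hij]
    have hinj2 : Set.InjOn hh K2 := by
      intro i hi j hj hij
      have h1 := (hhh' i hi).1
      have h2 := (hhh' j hj).1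
      rw [← h1, ← h2, hij]
    have hdisj : Disjoint (K1.image gg) (K2.image hh) := by
      rw [Finset.disjoint_left]
      rintro x hx1 hx2
      obtain ⟨i, hi, rfl⟩ := Finset.mem_image.mp hx1
      obtain ⟨j, hj, hji⟩ := Finset.mem_image.mp hx2
      have h3 := dist_gg_hh i hi j hj
      rw [← hji] at h3
      simp [SimpleGraph.dist_self] at h3
    rw [hC, Finset.card_union_of_disjoint hdisj,
      Finset.card_image_of_injOn hinj1, Finset.card_image_of_injOn hinj2]
    exact hρ
  have hC1 : ∀ x ∈ C, G.dist v x + 1 ≤ r := by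
    intro x hx
    rw [hC, Finset.mem_union] at hx
    rcases hx with hx | hx
    · obtain ⟨i, hi, rfl⟩ := Finset.mem_image.mp hx
      have h1 := (hgg' i hi).1
      have h2 := (hK1mem i hi).1
      omega
    · obtain ⟨i, hi, rfl⟩ := Finset.mem_image.mp hx
      have h1 := (hhh' i hi).1
      have h2 := (hK2mem i hi).2.1
      omega
  have hC2 : ∀ x ∈ C, ∀ y ∈ C, x ≠ y → 3 ≤ G.dist x y := by
    intro x hx y hy hxy
    rw [hC, Finset.mem_union] at hx hy
    rcases hx with hx | hx <;> rcases hy with hy | hy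
    · obtain ⟨i, hi, rfl⟩ := Finset.mem_image.mp hx
      obtain ⟨j, hj, rfl⟩ := Finset.mem_image.mp hy
      exact dist_gg_gg i hi j hj (fun h => hxy (by rw [h]))
    · obtain ⟨i, hi, rfl⟩ := Finset.mem_image.mp hx
      obtain ⟨j, hj, rfl⟩ := Finset.mem_image.mp hy
      exact dist_gg_hh i hi j hj
    · obtain ⟨i, hi, rfl⟩ := Finset.mem_image.mp hx
      obtain ⟨j, hj, rfl⟩ := Finset.mem_image.mp hy
      have := dist_gg_hh j hj i hi
      have hcomm : G.dist (hh i) (gg j) = G.dist (gg j) (hh i) := SimpleGraph.dist_comm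
      omega
    · obtain ⟨i, hi, rfl⟩ := Finset.mem_image.mp hx
      obtain ⟨j, hj, rfl⟩ := Finset.mem_image.mp hy
      exact dist_hh_hh i hi j hj (fun h => hxy (by rw [h]))
  calc R * (G.minDegree + 1) ≤ C.card * (G.minDegree + 1) :=
        Nat.mul_le_mul_right _ hCcard
    _ ≤ _ := ball_ge_of_centers hG C hC1 hC2

end EdgeGrowthAux

/-- The `r`-th power of a graph: two distinct vertices are adjacent whenever they are
within distance `r` of each other. -/
def SimpleGraph.power {V : Type*} (G : SimpleGraph V) (r : ℕ) : SimpleGraph V where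
  Adj u v := u ≠ v ∧ G.dist u v ≤ r
  symm := ⟨fun u v h => ⟨h.1.symm, by rw [SimpleGraph.dist_comm]; exact h.2⟩⟩
  loopless := ⟨fun v h => h.1 rfl⟩

theorem edge_growth_loops_ne_zero_mod_three {V : Type*} [Fintype V]
    (G : SimpleGraph V) [DecidableRel G.Adj] (hG : G.Connected)
    (r : ℕ) (hr3 : r % 3 ≠ 0) (hr : 6 ≤ r)
    (hdiam : ∃ u w : V, r ≤ G.dist u w) :
    (1 / 2 : ℝ) * (⌈(r : ℝ) / 3⌉ : ℝ) * (G.minDegree + 1) * Nat.card V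
        + (1 / 2 : ℝ) * Nat.card V
      ≤ ((G.power r).edgeSet.ncard : ℝ) + Nat.card V := by
  classical
  obtain ⟨u, w, huw⟩ := hdiam
  set δ := G.minDegree + 1 with hδ
  set R := (r + 2) / 3 with hR
  set n := Fintype.card V with hn
  -- pointwise ball bound
  have hpoint : ∀ v : V, R * δ ≤ (Finset.univ.filter (fun z => G.dist v z ≤ r)).card := by
    intro v
    rcases le_total (G.dist v u) (G.dist v w) with h | h
    · exact EdgeGrowthAux.ball_card_core hG hr huw h
    · have huw' : r ≤ G.dist w u := by
        rwa [SimpleGraph.dist_comm]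
      exact EdgeGrowthAux.ball_card_core hG hr huw' h
  -- the ball is the closed power neighborhood
  have hball : ∀ v : V, (Finset.univ.filter (fun z => G.dist v z ≤ r)).card
      = (G.power r).degree v + 1 := by
    intro v
    have hset : Finset.univ.filter (fun z => G.dist v z ≤ r)
        = insert v ((G.power r).neighborFinset v) := by
      ext z
      simp only [Finset.mem_filter, Finset.mem_univ, true_and, Finset.mem_insert,
        SimpleGraph.mem_neighborFinset]
      constructor
      · intro hz
        rcases eq_or_ne z v with rfl | hne
        · exact Or.inl rfl
        · exact Or.inr ⟨fun hvz => hne hvz.symm, hz⟩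
      · rintro (rfl | hz)
        · simp [SimpleGraph.dist_self]
        · exact hz.2
    rw [hset, Finset.card_insert_of_notMem, SimpleGraph.card_neighborFinset_eq_degree]
    intro hv
    exact (G.power r).irrefl ((SimpleGraph.mem_neighborFinset _ _ _).mp hv)
  -- sum up
  have hkey : n * (R * δ) ≤ 2 * (G.power r).edgeFinset.card + n := by
    calc n * (R * δ) = ∑ _v : V, R * δ := by
          rw [Finset.sum_const, Finset.card_univ, smul_eq_mul]
      _ ≤ ∑ v : V, ((G.power r).degree v + 1) := by
          refine Finset.sum_le_sum fun v _ => ?_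
          rw [← hball v]; exact hpoint v
      _ = (∑ v : V, (G.power r).degree v) + n := by
          rw [Finset.sum_add_distrib, Finset.sum_const, Finset.card_univ, smul_eq_mul,
            mul_one]
      _ = 2 * (G.power r).edgeFinset.card + n := by
          rw [SimpleGraph.sum_degrees_eq_twice_card_edges]
  have hEcard : (G.power r).edgeSet.ncard = (G.power r).edgeFinset.card :=
    Set.ncard_eq_toFinset_card' _
  rw [Nat.card_eq_fintype_card, ← hn, hEcard]
  have hceil : (⌈(r : ℝ) / 3⌉ : ℝ) ≤ (R : ℝ) := by
    have h3 : (r : ℝ) / 3 ≤ (R : ℝ) := by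
      rw [div_le_iff₀ (by norm_num : (0:ℝ) < 3)]
      have : r ≤ R * 3 := by omega
      exact_mod_cast this
    calc (⌈(r : ℝ) / 3⌉ : ℝ) ≤ (((R : ℤ)) : ℝ) := by
          exact_mod_cast Int.ceil_le.mpr (by exact_mod_cast h3)
      _ = (R : ℝ) := by push_cast; ring
  have hkeyR : (n : ℝ) * ((R : ℝ) * (δ : ℝ)) ≤
      2 * ((G.power r).edgeFinset.card : ℝ) + (n : ℝ) := by
    exact_mod_cast hkey
  have hdn : (0 : ℝ) ≤ (δ : ℝ) * (n : ℝ) := by positivity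
  have hmul := mul_le_mul_of_nonneg_right hceil hdn
  have hδR : ((G.minDegree : ℝ) + 1) = (δ : ℝ) := by rw [hδ]; push_cast; ring
  rw [hδR]
  nlinarith [hmul, hkeyR]
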